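/- Let λ₁ > 0, λ₂ > 0, λ₃ < 0 be reals with |λ₃| ≥ max{λ₁, λ₂}, let η > 0, X ≥ 1, and δ > 0 small enough (in terms of the λ_j). Set a_j = 2δ|λ₃|/λ_j and b_j = (3/2)a_j for j = 1,2. Then for every (u₁,u₂) ∈ [a₁X, b₁X] × [a₂X, b₂X], provided η ≤ δ|λ₃|X, one has ∫_{δX}^{(1−δ)X} max{0, η − |λ₁u₁ + λ₂u₂ + λ₃u₃|} du₃ = η²/|λ₃| ≫ η². -/

import Mathlib

open Real MeasureTheory

lemma tent_cont (L η c : ℝ) : Continuous (fun u : ℝ => max 0 (η - L * |u - c|)) := by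
  exact continuous_const.max (continuous_const.sub (continuous_const.mul ((continuous_id.sub continuous_const).abs)))

lemma lin_integral (A B p q : ℝ) :
    ∫ u in p..q, (A + B * u) = A * (q - p) + B * (q^2/2 - p^2/2) := by
  rw [intervalIntegral.integral_add intervalIntegrable_const
    ((by fun_prop : Continuous fun u : ℝ => B * u).intervalIntegrable _ _),
    intervalIntegral.integral_const, intervalIntegral.integral_const_mul,
    integral_id, smul_eq_mul]
  ring

lemma tent_integral (L η c a b : ℝ) (hL : 0 < L) (hη : 0 < η)
    (ha : a ≤ c - η / L) (hb : c + η / L ≤ b) :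
    ∫ u in a..b, max 0 (η - L * |u - c|) = η ^ 2 / L := by
  have hint : ∀ x y : ℝ, IntervalIntegrable (fun u : ℝ => max 0 (η - L * |u - c|)) volume x y :=
    fun x y => (tent_cont L η c).intervalIntegrable x y
  have ht : 0 < η / L := div_pos hη hL
  have hLt : L * (η / L) = η := by field_simp
  have h1 : (∫ u in a..(c - η/L), max 0 (η - L * |u - c|)) = 0 := by
    rw [intervalIntegral.integral_congr (g := fun _ => (0:ℝ))]
    · simp
    · intro u hu
      rw [Set.uIcc_of_le (by linarith)] at hu
      have h2 : η / L ≤ c - u := by linarith [hu.2]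
      have habs : η ≤ L * |u - c| := by
        rw [abs_sub_comm, abs_of_nonneg (by linarith)]
        nlinarith
      show max 0 (η - L * |u - c|) = 0
      exact max_eq_left (by linarith)
  have h3 : (∫ u in (c + η/L)..b, max 0 (η - L * |u - c|)) = 0 := by
    rw [intervalIntegral.integral_congr (g := fun _ => (0:ℝ))]
    · simp
    · intro u hu
      rw [Set.uIcc_of_le (by linarith)] at hu
      have h2 : η / L ≤ u - c := by linarith [hu.1]
      have habs : η ≤ L * |u - c| := by
        rw [abs_of_nonneg (by linarith)]
        nlinarith
      show max 0 (η - L * |u - c|) = 0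
      exact max_eq_left (by linarith)
  have h2l : (∫ u in (c - η/L)..c, max 0 (η - L * |u - c|)) = η^2/(2*L) := by
    rw [intervalIntegral.integral_congr (g := fun u => (η - L * c) + L * u)]
    · rw [lin_integral]
      field_simp
      ring
    · intro u hu
      rw [Set.uIcc_of_le (by linarith)] at hu
      have h1 : u ≤ c := hu.2
      have h2 : c - η/L ≤ u := hu.1
      show max 0 (η - L * |u - c|) = (η - L * c) + L * u
      rw [abs_sub_comm, abs_of_nonneg (by linarith)]
      rw [max_eq_right (by nlinarith)]
      ring
  have h2r : (∫ u in c..(c + η/L), max 0 (η - L * |u - c|)) = η^2/(2*L) := by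
    rw [intervalIntegral.integral_congr (g := fun u => (η + L * c) - L * u)]
    · have : ∀ u : ℝ, (η + L * c) - L * u = (η + L * c) + (-L) * u := fun u => by ring
      simp only [this]
      rw [lin_integral]
      field_simp
      ring
    · intro u hu
      rw [Set.uIcc_of_le (by linarith)] at hu
      have h1 : c ≤ u := hu.1
      have h2 : u ≤ c + η/L := hu.2
      show max 0 (η - L * |u - c|) = (η + L * c) - L * u
      rw [abs_of_nonneg (by linarith)]
      rw [max_eq_right (by nlinarith)]
      ring
  have split1 : (∫ u in a..b, max 0 (η - L * |u - c|)) =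
      (∫ u in a..(c - η/L), max 0 (η - L * |u - c|)) +
      (∫ u in (c - η/L)..c, max 0 (η - L * |u - c|)) +
      (∫ u in c..(c + η/L), max 0 (η - L * |u - c|)) +
      (∫ u in (c + η/L)..b, max 0 (η - L * |u - c|)) := by
    rw [intervalIntegral.integral_add_adjacent_intervals (hint _ _) (hint _ _),
        intervalIntegral.integral_add_adjacent_intervals (hint _ _) (hint _ _),
        intervalIntegral.integral_add_adjacent_intervals (hint _ _) (hint _ _)]
  rw [split1, h1, h2l, h2r, h3]
  field_simp
  ring

theorem major_arc_core (l₁ l₂ l₃ : ℝ) (h₁ : 0 < l₁) (h₂ : 0 < l₂) (h₃ : l₃ < 0)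
    (hmax : max l₁ l₂ ≤ |l₃|) :
    ∃ δ₀ > 0, ∀ δ : ℝ, 0 < δ → δ ≤ δ₀ → ∀ X ≥ (1 : ℝ), ∀ η : ℝ, 0 < η →
      η ≤ δ * |l₃| * X →
      ∀ u₁ u₂ : ℝ,
        u₁ ∈ Set.Icc ((2 * δ * |l₃| / l₁) * X) ((3 / 2) * (2 * δ * |l₃| / l₁) * X) →
        u₂ ∈ Set.Icc ((2 * δ * |l₃| / l₂) * X) ((3 / 2) * (2 * δ * |l₃| / l₂) * X) →
        ∫ u₃ in (δ * X)..((1 - δ) * X), max 0 (η - |l₁ * u₁ + l₂ * u₂ + l₃ * u₃|)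
          = η ^ 2 / |l₃| := by
  refine ⟨1/8, by norm_num, ?_⟩
  intro δ hδ hδ8 X hX η hη hηX u₁ u₂ hu₁ hu₂
  set L := |l₃| with hLdef
  have hL : 0 < L := abs_pos.mpr (ne_of_lt h₃)
  have hl₃ : l₃ = -L := by rw [hLdef, abs_of_neg h₃]; ring
  set S := l₁ * u₁ + l₂ * u₂ with hS
  set c := S / L with hc
  have hXpos : (0:ℝ) < X := by linarith
  -- bounds on S
  have hS1 : 2 * δ * L * X ≤ l₁ * u₁ := by
    have := hu₁.1
    calc 2 * δ * L * X = l₁ * ((2 * δ * L / l₁) * X) := by field_simp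
    _ ≤ l₁ * u₁ := by nlinarith [hu₁.1]
  have hS1' : l₁ * u₁ ≤ 3 * δ * L * X := by
    have h := hu₁.2
    have : l₁ * u₁ ≤ l₁ * ((3/2) * (2 * δ * L / l₁) * X) := by nlinarith
    calc l₁ * u₁ ≤ l₁ * ((3/2) * (2 * δ * L / l₁) * X) := this
    _ = 3 * δ * L * X := by field_simp
  have hS2 : 2 * δ * L * X ≤ l₂ * u₂ := by
    calc 2 * δ * L * X = l₂ * ((2 * δ * L / l₂) * X) := by field_simp
    _ ≤ l₂ * u₂ := by nlinarith [hu₂.1]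
  have hS2' : l₂ * u₂ ≤ 3 * δ * L * X := by
    have h := hu₂.2
    have : l₂ * u₂ ≤ l₂ * ((3/2) * (2 * δ * L / l₂) * X) := by nlinarith
    calc l₂ * u₂ ≤ l₂ * ((3/2) * (2 * δ * L / l₂) * X) := this
    _ = 3 * δ * L * X := by field_simp
  have hclo : 4 * δ * X ≤ c := by
    rw [hc, le_div_iff₀ hL]
    nlinarith
  have hchi : c ≤ 6 * δ * X := by
    rw [hc, div_le_iff₀ hL]
    nlinarith
  have hηL : η / L ≤ δ * X := by
    rw [div_le_iff₀ hL]; nlinarith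
  have key : ∀ u₃ : ℝ, |l₁ * u₁ + l₂ * u₂ + l₃ * u₃| = L * |u₃ - c| := by
    intro u₃
    have : l₁ * u₁ + l₂ * u₂ + l₃ * u₃ = -(L * (u₃ - c)) := by
      rw [hl₃, hc]; field_simp; ring
    rw [this, abs_neg, abs_mul, abs_of_pos hL]
  simp only [hS, key]
  exact tent_integral L η c (δ * X) ((1 - δ) * X) hL hη (by linarith) (by nlinarith)
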